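/- If V ∈ 𝓕, then every point u ∈ Λ(Ψ(V)) is of the form u = ( max_{b∈B} [ Σ_{a∈A} α_a r_k(a,b) + β Q_k(b) ] )_{k=1,…,K} for some α ∈ Δ(A) and some choice of Q(b) ∈ V for each b ∈ B. -/

import Mathlib

/-- The upset of `A` within `[0,1]^K`: points of `[0,1]^K` dominating some point of `A`. -/
def upset (K : ℕ) (A : Set (Fin K → ℝ)) : Set (Fin K → ℝ) :=
  {x | x ∈ Set.Icc (0 : Fin K → ℝ) 1 ∧ ∃ y ∈ A, y ≤ x}

/-- Membership in the space `𝓕`: a nonempty Pareto frontier in `[0,1]^K`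
(no element dominates a different element) whose upset is closed and convex. -/
def memF (K : ℕ) (V : Set (Fin K → ℝ)) : Prop :=
  V.Nonempty ∧ V ⊆ Set.Icc (0 : Fin K → ℝ) 1 ∧
    (∀ u ∈ V, ∀ v ∈ V, u ≤ v → u = v) ∧
    IsClosed (upset K V) ∧ Convex ℝ (upset K V)

/-- The metric `d` on `𝓕`: Hausdorff distance (for the ℓ∞ norm) between upsets. -/
noncomputable def dF (K : ℕ) (U V : Set (Fin K → ℝ)) : ℝ :=
  Metric.hausdorffDist (upset K U) (upset K V)

/-- The lower Pareto frontier `Λ(S)`: the minimal elements of `S` in the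
coordinatewise order, i.e. the elements of `S` dominating no other element of `S`. -/
def pareto (K : ℕ) (S : Set (Fin K → ℝ)) : Set (Fin K → ℝ) :=
  {x ∈ S | ∀ y ∈ S, y ≤ x → y = x}

/-- The probability simplex over `Fin m`. -/
def simplex (m : ℕ) : Set (Fin m → ℝ) :=
  {α | (∀ a, 0 ≤ α a) ∧ ∑ a, α a = 1}

/-- The one-stage operator `Ψ`. -/
def psi (K m n : ℕ) (hn : 0 < n) (β : ℝ) (r : Fin K → Fin m → Fin n → ℝ)
    (S : Set (Fin K → ℝ)) : Set (Fin K → ℝ) :=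
  {u | ∃ α ∈ simplex m, ∃ R : Fin m → Fin n → Fin K → ℝ,
    (∀ a b, R a b ∈ S) ∧
    ∀ k, u k = Finset.univ.sup'
      (Finset.univ_nonempty_iff.mpr (Fin.pos_iff_nonempty.mp hn))
      (fun b => ∑ a, α a * (r k a b + β * R a b k))}

/-- every point of `Λ(Ψ(V))` is of the form
`( max_b [ Σ_a α_a r_k(a,b) + β Q_k(b) ] )_k` with `α ∈ Δ(A)` and `Q(b) ∈ V`. -/
theorem pareto_psi_form {K m n : ℕ} (hK : 0 < K) (hm : 0 < m) (hn : 0 < n)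
    (β : ℝ) (hβ : β ∈ Set.Ico (0:ℝ) 1)
    (r : Fin K → Fin m → Fin n → ℝ) (hr : ∀ k a b, r k a b ∈ Set.Icc (0:ℝ) (1 - β))
    (V : Set (Fin K → ℝ)) (hV : memF K V)
    (u : Fin K → ℝ) (hu : u ∈ pareto K (psi K m n hn β r V)) :
    ∃ α ∈ simplex m, ∃ Q : Fin n → Fin K → ℝ, (∀ b, Q b ∈ V) ∧
      ∀ k, u k = Finset.univ.sup'
        (Finset.univ_nonempty_iff.mpr (Fin.pos_iff_nonempty.mp hn))
        (fun b => (∑ a, α a * r k a b) + β * Q b k) := by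
  obtain ⟨huP, humin⟩ := hu
  obtain ⟨α, hα, R, hR, hform⟩ := huP
  obtain ⟨hVne, hVicc, hVpar, hVcl, hVcv⟩ := hV
  have hVsub : V ⊆ upset K V := fun v hv => ⟨hVicc hv, v, hv, le_refl v⟩
  -- the convex combination Qb ∈ upset V
  have hQb : ∀ b : Fin n, (∑ a, α a • R a b) ∈ upset K V := by
    intro b
    exact hVcv.sum_mem (fun a _ => hα.1 a) hα.2 (fun a _ => hVsub (hR a b))
  choose Q' hQ'V hQ'le using fun b => (hQb b).2
  refine ⟨α, hα, Q', hQ'V, ?_⟩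
  -- the candidate lower point
  set u' : Fin K → ℝ := fun k => Finset.univ.sup'
      (Finset.univ_nonempty_iff.mpr (Fin.pos_iff_nonempty.mp hn))
      (fun b => (∑ a, α a * r k a b) + β * Q' b k) with hu'def
  have key : ∀ (k : Fin K) (b : Fin n),
      ∑ a, α a * (r k a b + β * Q' b k) = (∑ a, α a * r k a b) + β * Q' b k := by
    intro k b
    rw [Finset.sum_congr rfl (fun a _ => mul_add (α a) (r k a b) (β * Q' b k)),
      Finset.sum_add_distrib, ← Finset.sum_mul, hα.2, one_mul]
  have hu'psi : u' ∈ psi K m n hn β r V := by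
    refine ⟨α, hα, fun a b => Q' b, fun a b => hQ'V b, fun k => ?_⟩
    simp only [hu'def]
    exact congrArg _ (funext fun b => (key k b).symm)
  have hle : u' ≤ u := by
    intro k
    rw [hform k]
    apply Finset.sup'_mono_fun
    intro b _
    have h1 : ∑ a, α a * (r k a b + β * R a b k)
        = (∑ a, α a * r k a b) + β * ∑ a, α a * R a b k := by
      rw [Finset.sum_congr rfl (fun a _ => mul_add (α a) (r k a b) (β * R a b k)),
        Finset.sum_add_distrib, Finset.mul_sum]
      congr 1
      exact Finset.sum_congr rfl (fun a _ => by ring)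
    rw [h1]
    have h2 : Q' b k ≤ ∑ a, α a * R a b k := by
      have := hQ'le b k
      simpa [Finset.sum_apply, smul_eq_mul] using this
    exact add_le_add_right (mul_le_mul_of_nonneg_left h2 hβ.1) _
  have := humin u' hu'psi hle
  intro k
  rw [← this]
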